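/- Let r₁ and r₂ be rational numbers with 0 < r₁ ≤ r₂ < 1 and r₁ + r₂ ≤ 1. Then for every rational number r with 0 < r < 1, the triple (1-r₁, 1-r₂, 1-r) is not realizable. (This is the statement that the Seifert fibered space S²(-2, r₁, r₂, r) is an L-space for every 0 < r < 1.) -/

import Mathlib

/-- A triple of rationals is *realizable* if there exist relatively prime positive
integers `a`, `k` with `0 < a ≤ k/2` such that the increasing rearrangement
`(t₁, t₂, t₃)` of `(s₁, s₂, s₃)` satisfies `t₁ < 1/k`, `t₂ < a/k`, `t₃ < (k-a)/k`. -/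
def Realizable (s₁ s₂ s₃ : ℚ) : Prop :=
  ∃ a k : ℕ, 0 < a ∧ 2 * a ≤ k ∧ Nat.Coprime a k ∧
    ∃ t₁ t₂ t₃ : ℚ, ({t₁, t₂, t₃} : Multiset ℚ) = ({s₁, s₂, s₃} : Multiset ℚ) ∧
      t₁ ≤ t₂ ∧ t₂ ≤ t₃ ∧
      t₁ < 1 / (k : ℚ) ∧ t₂ < (a : ℚ) / k ∧ t₃ < ((k : ℚ) - (a : ℚ)) / k

/-- If `0 < r₁ ≤ r₂ < 1` and `r₁ + r₂ ≤ 1`, then for every rational `r` with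
`0 < r < 1` the triple `(1-r₁, 1-r₂, 1-r)` is not realizable. -/
theorem lspace_minus_two (r₁ r₂ : ℚ) (h₁ : 0 < r₁) (h₁₂ : r₁ ≤ r₂) (h₂ : r₂ < 1)
    (hsum : r₁ + r₂ ≤ 1) :
    ∀ r : ℚ, 0 < r → r < 1 → ¬ Realizable (1 - r₁) (1 - r₂) (1 - r) := by
  intro r hr hr1 hreal
  obtain ⟨a, k, ha, hak, -, t₁, t₂, t₃, hms, h12, h23, ht1, ht2, ht3⟩ := hreal
  have hk0 : 0 < k := by omega
  have hk : (0:ℚ) < k := by exact_mod_cast hk0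
  have hsumeq : t₁ + t₂ + t₃ = (1 - r₁) + (1 - r₂) + (1 - r) := by
    have h := congrArg Multiset.sum hms
    simp only [Multiset.insert_eq_cons, Multiset.sum_cons, Multiset.sum_singleton] at h
    linarith
  have hmem : (1 - r) = t₁ ∨ (1 - r) = t₂ ∨ (1 - r) = t₃ := by
    have h : (1 - r) ∈ ({t₁, t₂, t₃} : Multiset ℚ) := by rw [hms]; simp
    simpa using h
  have ht1le : t₁ ≤ 1 - r := by rcases hmem with h | h | h <;> linarith
  have h1 : (a:ℚ)/k + ((k:ℚ)-a)/k = 1 := by field_simp; ring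
  linarith
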